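/- Group Contraction Lemma: For a social welfare function on at least three alternatives satisfying Pareto Efficiency, IIA, and Universality, any decisive coalition containing at least two voters has a proper subset that is also decisive. -/

import Mathlib

namespace ArrowGC

variable {A : Type}

open Classical in
noncomputable def mkKey (e : A → ℕ) (x y z : A) (nx ny nz : ℕ) : A → ℕ :=
  fun a => if a = x then nx else if a = y then ny else if a = z then nz else 3 + e a

def mkOrd (k : A → ℕ) : A → A → Prop := fun a b => k a < k b

lemma mkOrd_sto (k : A → ℕ) (hk : Function.Injective k) :
    IsStrictTotalOrder A (mkOrd k) :=
  { trichotomous := fun a b => by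
      rcases Nat.lt_trichotomy (k a) (k b) with h|h|h
      · exact fun h1 _ => absurd h h1
      · exact fun _ _ => hk h
      · exact fun _ h2 => absurd h h2
    irrefl := fun a => Nat.lt_irrefl _
    trans := fun a b c => Nat.lt_trans }

lemma mkKey_x (e : A → ℕ) (x y z : A) (nx ny nz : ℕ) :
    mkKey e x y z nx ny nz x = nx := by simp [mkKey]

lemma mkKey_y (e : A → ℕ) {x y : A} (z : A) (hxy : x ≠ y) (nx ny nz : ℕ) :
    mkKey e x y z nx ny nz y = ny := by simp [mkKey, Ne.symm hxy]

lemma mkKey_z (e : A → ℕ) {x y z : A} (hxz : x ≠ z) (hyz : y ≠ z) (nx ny nz : ℕ) :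
    mkKey e x y z nx ny nz z = nz := by simp [mkKey, Ne.symm hxz, Ne.symm hyz]

lemma mkKey_inj (e : A → ℕ) (he : Function.Injective e) {x y z : A}
    (hxy : x ≠ y) (hxz : x ≠ z) (hyz : y ≠ z) {nx ny nz : ℕ}
    (hb1 : nx < 3) (hb2 : ny < 3) (hb3 : nz < 3)
    (d1 : nx ≠ ny) (d2 : nx ≠ nz) (d3 : ny ≠ nz) :
    Function.Injective (mkKey e x y z nx ny nz) := by
  intro a b h
  simp only [mkKey] at h
  split_ifs at h <;> subst_vars <;>
    first
      | rfl
      | exact absurd h ‹_›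
      | exact absurd h.symm ‹_›
      | exact absurd h (by omega)
      | exact absurd h.symm (by omega)
      | exact he (by omega)

lemma sto_asymm {r : A → A → Prop} (h : IsStrictTotalOrder A r) {a b : A}
    (hab : r a b) : ¬ r b a := fun h' =>
  h.irrefl a (h.trans _ _ _ hab h')


section SWF

variable {V : Type} (f : (V → A → A → Prop) → (A → A → Prop))

def Dec (C : Finset V) (a b : A) : Prop :=
  ∀ R : V → A → A → Prop, (∀ i, IsStrictTotalOrder A (R i)) →
    (∀ i ∈ C, R i a b) → f R a b

def AlmostDec (C : Finset V) (a b : A) : Prop :=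
  ∀ R : V → A → A → Prop, (∀ i, IsStrictTotalOrder A (R i)) →
    (∀ i ∈ C, R i a b) → (∀ i ∉ C, R i b a) → f R a b

variable (e : A → ℕ) (he : Function.Injective e)
variable
    (hout : ∀ R : V → A → A → Prop,
      (∀ i, IsStrictTotalOrder A (R i)) → IsStrictTotalOrder A (f R))
    (pareto : ∀ R : V → A → A → Prop, (∀ i, IsStrictTotalOrder A (R i)) →
      ∀ x y : A, (∀ i, R i x y) → f R x y)
    (iia : ∀ R R' : V → A → A → Prop,
      (∀ i, IsStrictTotalOrder A (R i)) → (∀ i, IsStrictTotalOrder A (R' i)) →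
      ∀ x y : A, (∀ i, R i x y ↔ R' i x y) → (f R x y ↔ f R' x y))

include he hout pareto iia in
lemma dec_of_almost_left (C : Finset V) {u v w : A}
    (huv : u ≠ v) (huw : u ≠ w) (hvw : v ≠ w)
    (h : AlmostDec f C u v) : Dec f C u w := by
  classical
  intro R hR hC
  set R' : V → A → A → Prop := fun i =>
    if i ∈ C then mkOrd (mkKey e u v w 0 1 2)
    else mkOrd (mkKey e v u w 0 (if R i u w then 1 else 2) (if R i u w then 2 else 1))
    with hR'def
  have hR' : ∀ i, IsStrictTotalOrder A (R' i) := by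
    intro i
    by_cases hi : i ∈ C
    · simp only [hR'def, if_pos hi]
      exact mkOrd_sto _ (mkKey_inj e he huv huw hvw (by omega) (by omega) (by omega)
        (by omega) (by omega) (by omega))
    · simp only [hR'def, if_neg hi]
      by_cases hiw : R i u w <;> simp only [if_pos, if_neg, hiw, if_true, if_false] <;>
        exact mkOrd_sto _ (mkKey_inj e he (Ne.symm huv) hvw huw (by omega) (by omega)
          (by omega) (by omega) (by omega) (by omega))
  have h1 : f R' u v := by
    apply h R' hR'
    · intro i hi
      simp only [hR'def, if_pos hi]
      show mkKey e u v w 0 1 2 u < mkKey e u v w 0 1 2 v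
      rw [mkKey_x, mkKey_y e w huv]; omega
    · intro i hi
      simp only [hR'def, if_neg hi]
      show mkKey e v u w _ _ _ v < mkKey e v u w _ _ _ u
      rw [mkKey_x, mkKey_y e w (Ne.symm huv)]
      by_cases hiw : R i u w <;> simp [hiw]
  have h2 : f R' v w := by
    apply pareto R' hR'
    intro i
    by_cases hi : i ∈ C
    · simp only [hR'def, if_pos hi]
      show mkKey e u v w 0 1 2 v < mkKey e u v w 0 1 2 w
      rw [mkKey_y e w huv, mkKey_z e huw hvw]; omega
    · simp only [hR'def, if_neg hi]
      show mkKey e v u w _ _ _ v < mkKey e v u w _ _ _ w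
      rw [mkKey_x, mkKey_z e hvw huw]
      by_cases hiw : R i u w <;> simp [hiw]
  have h3 : f R' u w := by
    haveI := hout R' hR'
    exact trans_of (f R') h1 h2
  refine (iia R' R hR' hR u w fun i => ?_).mp h3
  by_cases hi : i ∈ C
  · exact iff_of_true (by
      simp only [hR'def, if_pos hi]
      show mkKey e u v w 0 1 2 u < mkKey e u v w 0 1 2 w
      rw [mkKey_x, mkKey_z e huw hvw]; omega) (hC i hi)
  · simp only [hR'def, if_neg hi]
    show mkOrd _ u w ↔ R i u w
    unfold mkOrd
    rw [mkKey_y e w (Ne.symm huv), mkKey_z e hvw huw]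
    by_cases hiw : R i u w <;> simp [hiw]

include he hout pareto iia in
lemma dec_of_almost_right (C : Finset V) {u v w : A}
    (huv : u ≠ v) (hwu : w ≠ u) (hwv : w ≠ v)
    (h : AlmostDec f C u v) : Dec f C w v := by
  classical
  intro R hR hC
  set R' : V → A → A → Prop := fun i =>
    if i ∈ C then mkOrd (mkKey e w u v 0 1 2)
    else mkOrd (mkKey e u w v 2 (if R i w v then 0 else 1) (if R i w v then 1 else 0))
    with hR'def
  have huw : u ≠ w := Ne.symm hwu
  have hvw : v ≠ w := Ne.symm hwv
  have hR' : ∀ i, IsStrictTotalOrder A (R' i) := by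
    intro i
    by_cases hi : i ∈ C
    · simp only [hR'def, if_pos hi]
      exact mkOrd_sto _ (mkKey_inj e he hwu hwv huv (by omega) (by omega) (by omega)
        (by omega) (by omega) (by omega))
    · simp only [hR'def, if_neg hi]
      by_cases hiw : R i w v <;> simp only [if_pos, if_neg, hiw, if_true, if_false] <;>
        exact mkOrd_sto _ (mkKey_inj e he huw huv hwv (by omega) (by omega)
          (by omega) (by omega) (by omega) (by omega))
  have h1 : f R' w u := by
    apply pareto R' hR'
    intro i
    by_cases hi : i ∈ C
    · simp only [hR'def, if_pos hi]
      show mkKey e w u v 0 1 2 w < mkKey e w u v 0 1 2 u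
      rw [mkKey_x, mkKey_y e v hwu]; omega
    · simp only [hR'def, if_neg hi]
      show mkKey e u w v _ _ _ w < mkKey e u w v _ _ _ u
      rw [mkKey_x, mkKey_y e v huw]
      by_cases hiw : R i w v <;> simp [hiw]
  have h2 : f R' u v := by
    apply h R' hR'
    · intro i hi
      simp only [hR'def, if_pos hi]
      show mkKey e w u v 0 1 2 u < mkKey e w u v 0 1 2 v
      rw [mkKey_y e v hwu, mkKey_z e hwv huv]; omega
    · intro i hi
      simp only [hR'def, if_neg hi]
      show mkKey e u w v _ _ _ v < mkKey e u w v _ _ _ u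
      rw [mkKey_x, mkKey_z e huv hwv]
      by_cases hiw : R i w v <;> simp [hiw]
  have h3 : f R' w v := by
    haveI := hout R' hR'
    exact trans_of (f R') h1 h2
  refine (iia R' R hR' hR w v fun i => ?_).mp h3
  by_cases hi : i ∈ C
  · exact iff_of_true (by
      simp only [hR'def, if_pos hi]
      show mkKey e w u v 0 1 2 w < mkKey e w u v 0 1 2 v
      rw [mkKey_x, mkKey_z e hwv huv]; omega) (hC i hi)
  · simp only [hR'def, if_neg hi]
    show mkOrd _ w v ↔ R i w v
    unfold mkOrd
    rw [mkKey_y e v huw, mkKey_z e huv hwv]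
    by_cases hiw : R i w v <;> simp [hiw]

lemma almost_of_dec {C : Finset V} {a b : A} (h : Dec f C a b) : AlmostDec f C a b :=
  fun R hR hC _ => h R hR hC

end SWF

lemma exists_third [Fintype A] (hA : 3 ≤ Fintype.card A) (a b : A) :
    ∃ c : A, c ≠ a ∧ c ≠ b := by
  classical
  by_contra h
  push_neg at h
  have hsub : (Finset.univ : Finset A) ⊆ {a, b} := by
    intro c _
    by_cases hc : c = a
    · simp [hc]
    · simp [h c hc]
  have h1 := Finset.card_le_card hsub
  have h2 : ({a, b} : Finset A).card ≤ 2 :=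
    (Finset.card_insert_le _ _).trans (by simp)
  rw [Finset.card_univ] at h1
  omega

section FE

variable {V : Type} (f : (V → A → A → Prop) → (A → A → Prop))

theorem field_expansion [Fintype A] (hA : 3 ≤ Fintype.card A)
    (e : A → ℕ) (he : Function.Injective e)
    (hout : ∀ R : V → A → A → Prop,
      (∀ i, IsStrictTotalOrder A (R i)) → IsStrictTotalOrder A (f R))
    (pareto : ∀ R : V → A → A → Prop, (∀ i, IsStrictTotalOrder A (R i)) →
      ∀ x y : A, (∀ i, R i x y) → f R x y)
    (iia : ∀ R R' : V → A → A → Prop,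
      (∀ i, IsStrictTotalOrder A (R i)) → (∀ i, IsStrictTotalOrder A (R' i)) →
      ∀ x y : A, (∀ i, R i x y ↔ R' i x y) → (f R x y ↔ f R' x y))
    (C : Finset V) {u v : A} (huv : u ≠ v) (h : AlmostDec f C u v) :
    ∀ a b : A, a ≠ b → Dec f C a b := by
  have L1 : ∀ {u' v' w : A}, u' ≠ v' → u' ≠ w → v' ≠ w →
      AlmostDec f C u' v' → Dec f C u' w :=
    fun h1 h2 h3 hh => dec_of_almost_left f e he hout pareto iia C h1 h2 h3 hh
  have L2 : ∀ {u' v' w : A}, u' ≠ v' → w ≠ u' → w ≠ v' →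
      AlmostDec f C u' v' → Dec f C w v' :=
    fun h1 h2 h3 hh => dec_of_almost_right f e he hout pareto iia C h1 h2 h3 hh
  -- decisive over (u, w) for every w ≠ u, w ≠ v
  have Duw : ∀ {w : A}, w ≠ u → w ≠ v → Dec f C u w :=
    fun hwu hwv => L1 huv (Ne.symm hwu) (Ne.symm hwv) h
  -- decisive over (w, v) for every w ≠ u, w ≠ v
  have Dwv : ∀ {w : A}, w ≠ u → w ≠ v → Dec f C w v :=
    fun hwu hwv => L2 huv hwu hwv h
  -- decisive over (u, v)
  have Duv : Dec f C u v := by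
    obtain ⟨w, hwu, hwv⟩ := exists_third hA u v
    exact L1 (Ne.symm hwu) huv hwv (almost_of_dec f (Duw hwu hwv))
  -- decisive over (v, u)
  have Dvu : Dec f C v u := by
    obtain ⟨w, hwu, hwv⟩ := exists_third hA u v
    have dwu : Dec f C w u :=
      L1 hwv hwu (Ne.symm huv) (almost_of_dec f (Dwv hwu hwv))
    exact L2 hwu (Ne.symm hwv) (Ne.symm huv) (almost_of_dec f dwu)
  intro a b hab
  by_cases hau : a = u
  · subst hau
    by_cases hbv : b = v
    · subst hbv; exact Duv
    · exact Duw (Ne.symm hab) hbv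
  · by_cases hav : a = v
    · subst hav
      by_cases hbu : b = u
      · subst hbu; exact Dvu
      · -- a = v, b ≠ u, b ≠ v
        have dub : Dec f C u b := Duw hbu (Ne.symm hab)
        exact L2 (Ne.symm hbu) hau hab (almost_of_dec f dub)
    · by_cases hbu : b = u
      · subst hbu
        -- a ≠ u, a ≠ v, b = u
        have dav : Dec f C a v := Dwv hau hav
        exact L1 hav hau (Ne.symm huv) (almost_of_dec f dav)
      · by_cases hbv : b = v
        · subst hbv; exact Dwv hau hav
        · -- generic case
          have dub : Dec f C u b := Duw hbu hbv
          exact L2 (Ne.symm hbu) hau hab (almost_of_dec f dub)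

end FE

end ArrowGC

/-- Group Contraction Lemma: for a social welfare function satisfying Pareto Efficiency,
IIA and Universality over at least three alternatives, any decisive coalition with at
least two voters has a proper subset that is also decisive. -/
theorem group_contraction_lemma
    {V A : Type} [Fintype V] [Fintype A] (hA : 3 ≤ Fintype.card A)
    (f : (V → A → A → Prop) → (A → A → Prop))
    (hout : ∀ R : V → A → A → Prop,
      (∀ i, IsStrictTotalOrder A (R i)) → IsStrictTotalOrder A (f R))
    (pareto : ∀ R : V → A → A → Prop, (∀ i, IsStrictTotalOrder A (R i)) →
      ∀ x y : A, (∀ i, R i x y) → f R x y)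
    (iia : ∀ R R' : V → A → A → Prop,
      (∀ i, IsStrictTotalOrder A (R i)) → (∀ i, IsStrictTotalOrder A (R' i)) →
      ∀ x y : A, (∀ i, R i x y ↔ R' i x y) → (f R x y ↔ f R' x y))
    (G : Finset V) (hG : 2 ≤ G.card)
    (decisive : ∀ a b : A, a ≠ b →
      ∀ R : V → A → A → Prop, (∀ i, IsStrictTotalOrder A (R i)) →
        (∀ i ∈ G, R i a b) → f R a b) :
    ∃ G' : Finset V, G' ⊂ G ∧
      ∀ a b : A, a ≠ b →
        ∀ R : V → A → A → Prop, (∀ i, IsStrictTotalOrder A (R i)) →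
          (∀ i ∈ G', R i a b) → f R a b := by
  classical
  open ArrowGC in
  obtain ⟨i0, hi0, j, hj, hij⟩ := Finset.one_lt_card.mp (by omega : 1 < G.card)
  obtain ⟨x⟩ : Nonempty A := Fintype.card_pos_iff.mp (by omega)
  obtain ⟨y, hyx, -⟩ := ArrowGC.exists_third hA x x
  obtain ⟨z, hzx, hzy⟩ := ArrowGC.exists_third hA x y
  have hxy : x ≠ y := Ne.symm hyx
  have hxz : x ≠ z := Ne.symm hzx
  have hyz : y ≠ z := Ne.symm hzy
  set e : A → ℕ := fun a => (Fintype.equivFin A a).val with he_def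
  have he : Function.Injective e := fun a b h =>
    (Fintype.equivFin A).injective (Fin.val_injective h)
  set R0 : V → A → A → Prop := fun i =>
    if i = i0 then ArrowGC.mkOrd (ArrowGC.mkKey e x y z 0 1 2)
    else if i ∈ G then ArrowGC.mkOrd (ArrowGC.mkKey e x y z 1 2 0)
    else ArrowGC.mkOrd (ArrowGC.mkKey e x y z 2 0 1) with hR0def
  have hR0 : ∀ i, IsStrictTotalOrder A (R0 i) := by
    intro i
    simp only [hR0def]
    split_ifs <;>
      exact ArrowGC.mkOrd_sto _ (ArrowGC.mkKey_inj e he hxy hxz hyz (by omega) (by omega)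
        (by omega) (by omega) (by omega) (by omega))
  have hfxy : f R0 x y := by
    apply decisive x y hxy R0 hR0
    intro i hi
    simp only [hR0def]
    by_cases hii : i = i0
    · rw [if_pos hii]
      show ArrowGC.mkKey e x y z 0 1 2 x < ArrowGC.mkKey e x y z 0 1 2 y
      rw [ArrowGC.mkKey_x, ArrowGC.mkKey_y e z hxy]; omega
    · rw [if_neg hii, if_pos hi]
      show ArrowGC.mkKey e x y z 1 2 0 x < ArrowGC.mkKey e x y z 1 2 0 y
      rw [ArrowGC.mkKey_x, ArrowGC.mkKey_y e z hxy]; omega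
  haveI hsto0 := hout R0 hR0
  rcases trichotomous_of (f R0) x z with hxzf | heq | hzxf
  · -- {i0} is decisive
    have halmost : ArrowGC.AlmostDec f {i0} x z := by
      intro R hR hC hNC
      refine (iia R0 R hR0 hR x z fun i => ?_).mp hxzf
      by_cases hii : i = i0
      · subst hii
        refine iff_of_true ?_ (hC i (Finset.mem_singleton_self i))
        simp only [hR0def, if_pos rfl]
        show ArrowGC.mkKey e x y z 0 1 2 x < ArrowGC.mkKey e x y z 0 1 2 z
        rw [ArrowGC.mkKey_x, ArrowGC.mkKey_z e hxz hyz]; omega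
      · refine iff_of_false ?_
          (ArrowGC.sto_asymm (hR i) (hNC i (by simp [hii])))
        simp only [hR0def, if_neg hii]
        by_cases hiG : i ∈ G
        · rw [if_pos hiG]
          show ¬ ArrowGC.mkKey e x y z 1 2 0 x < ArrowGC.mkKey e x y z 1 2 0 z
          rw [ArrowGC.mkKey_x, ArrowGC.mkKey_z e hxz hyz]; omega
        · rw [if_neg hiG]
          show ¬ ArrowGC.mkKey e x y z 2 0 1 x < ArrowGC.mkKey e x y z 2 0 1 z
          rw [ArrowGC.mkKey_x, ArrowGC.mkKey_z e hxz hyz]; omega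
    refine ⟨{i0}, ?_, ?_⟩
    · exact (Finset.ssubset_iff_of_subset (Finset.singleton_subset_iff.mpr hi0)).mpr
        ⟨j, hj, by simpa using Ne.symm hij⟩
    · exact fun a b hab R hR hC =>
        ArrowGC.field_expansion f hA e he hout pareto iia {i0} hxz halmost a b hab R hR hC
  · exact absurd heq hxz
  · -- G.erase i0 is decisive
    have hzyf : f R0 z y := trans_of (f R0) hzxf hfxy
    have halmost : ArrowGC.AlmostDec f (G.erase i0) z y := by
      intro R hR hC hNC
      refine (iia R0 R hR0 hR z y fun i => ?_).mp hzyf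
      by_cases hiG2 : i ∈ G.erase i0
      · obtain ⟨hii, hiG⟩ := Finset.mem_erase.mp hiG2
        refine iff_of_true ?_ (hC i hiG2)
        simp only [hR0def, if_neg hii, if_pos hiG]
        show ArrowGC.mkKey e x y z 1 2 0 z < ArrowGC.mkKey e x y z 1 2 0 y
        rw [ArrowGC.mkKey_y e z hxy, ArrowGC.mkKey_z e hxz hyz]; omega
      · refine iff_of_false ?_ (ArrowGC.sto_asymm (hR i) (hNC i hiG2))
        simp only [hR0def]
        by_cases hii : i = i0
        · rw [if_pos hii]
          show ¬ ArrowGC.mkKey e x y z 0 1 2 z < ArrowGC.mkKey e x y z 0 1 2 y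
          rw [ArrowGC.mkKey_y e z hxy, ArrowGC.mkKey_z e hxz hyz]; omega
        · have hiG : i ∉ G := fun hiG => hiG2 (Finset.mem_erase.mpr ⟨hii, hiG⟩)
          rw [if_neg hii, if_neg hiG]
          show ¬ ArrowGC.mkKey e x y z 2 0 1 z < ArrowGC.mkKey e x y z 2 0 1 y
          rw [ArrowGC.mkKey_y e z hxy, ArrowGC.mkKey_z e hxz hyz]; omega
    refine ⟨G.erase i0, Finset.erase_ssubset hi0, ?_⟩
    exact fun a b hab R hR hC =>
      ArrowGC.field_expansion f hA e he hout pareto iia (G.erase i0) hzy halmost a b hab R hR hC
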